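/- arXiv:2604.27424 — 2 statements merged into one kernel-verified Lean document; each statement's English description precedes it below -/
import Mathlib

section
/- Let T be a tree with a vertex w of degree at least 3 that is adjacent to two distinct pendant paths each on s vertices, where s ≥ 1, and let T' be the tree obtained from T by removing all s vertices of one of these pendant paths. Then for all k ≥ 2: (i) if k ≥ 2s, then mdi_k(T) ≥ mdi_k(T') + s; (ii) if k = 2s − 1 or k = 2s − 2, then mdi_k(T) ≥ mdi_k(T') + s − 1. -/
/-- `J` is a distance-`k` independent set in `G`: any two distinct vertices of `J`
are at graph distance at least `k + 1`. -/
def DkIndep {V : Type*} (G : SimpleGraph V) (k : ℕ) (J : Set V) : Prop :=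
  ∀ ⦃u⦄, u ∈ J → ∀ ⦃v⦄, v ∈ J → u ≠ v → k + 1 ≤ G.dist u v

/-- `J` is a maximal distance-`k` independent set (`k`-MDIS) of `G`. -/
def MaxDkIndep {V : Type*} (G : SimpleGraph V) (k : ℕ) (J : Set V) : Prop :=
  DkIndep G k J ∧ ∀ J', DkIndep G k J' → J ⊆ J' → J' = J

/-- `mdi G k` is the number of maximal distance-`k` independent sets of `G`. -/
noncomputable def mdi {V : Type*} (G : SimpleGraph V) (k : ℕ) : ℕ :=
  {J : Set V | MaxDkIndep G k J}.ncard

/-- `f_k(n)` from the paper. -/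
def fk (k n : ℕ) : ℕ :=
  if n ≤ k + 1 then n else n - (n - k % 2) / (k / 2 + 1) + 1

/-- closed ball `N_k[x]`. -/
def ball {V : Type*} (G : SimpleGraph V) (k : ℕ) (x : V) : Set V :=
  {v | G.dist x v ≤ k}

/-- a leaf is a vertex of degree 1. -/
def IsLeaf {V : Type*} (G : SimpleGraph V) (v : V) : Prop :=
  (G.neighborSet v).ncard = 1

/-- eccentricity of a vertex. -/
noncomputable def ecc {V : Type*} [Fintype V] (G : SimpleGraph V) (v : V) : ℕ :=
  Finset.univ.sup (G.dist v)

/-- diameter of a finite graph. -/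
noncomputable def gdiam {V : Type*} [Fintype V] (G : SimpleGraph V) : ℕ :=
  Finset.univ.sup (ecc G)

/-- a central vertex is one of minimum eccentricity. -/
def IsCentral {V : Type*} [Fintype V] (G : SimpleGraph V) (v : V) : Prop :=
  ∀ u, ecc G v ≤ ecc G u

/-- a `k`-twin: some other vertex has the same closed `k`-ball. -/
def KTwin {V : Type*} (G : SimpleGraph V) (k : ℕ) (u : V) : Prop :=
  ∃ v, v ≠ u ∧ ball G k u = ball G k v

/-- a diametral leaf: a leaf whose eccentricity equals the diameter. -/
def IsDiametralLeaf {V : Type*} [Fintype V] (G : SimpleGraph V) (u : V) : Prop :=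
  IsLeaf G u ∧ ecc G u = gdiam G

/-- a `k`-special pair. -/
def KSpecial {V : Type*} [Fintype V] (G : SimpleGraph V) (k : ℕ) (x y : V) : Prop :=
  IsDiametralLeaf G x ∧ IsDiametralLeaf G y ∧ KTwin G k x ∧ KTwin G k y ∧
    ball G k x ≠ ball G k y

/-- `mdi*_k(G, ℓ)`. -/
noncomputable def mdiStar {V : Type*} (G : SimpleGraph V) (k : ℕ) (ℓ : V) : ℕ :=
  {J : Set V | MaxDkIndep G k J ∧ ℓ ∈ J ∧ ∃ w ∉ J, ball G k w ∩ J = {ℓ}}.ncard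

/-- The spider tree `S_{p,m}`: a center (`none`) together with `p` legs of `m` vertices. -/
def spider (p m : ℕ) : SimpleGraph (Option (Fin p × Fin m)) :=
  SimpleGraph.fromRel fun a b =>
    match a, b with
    | none, some (_, j) => (j : ℕ) = 0
    | some (i, j), some (i', j') => i = i' ∧ (j : ℕ) + 1 = (j' : ℕ)
    | _, _ => False

/-- `S'_{p,m}`: the spider `S_{p,m}` with one leaf at distance `m` from the center removed. -/
def spider' (p m : ℕ) (hp : 0 < p) (hm : 0 < m) :=
  (spider p m).induce
    {v | v ≠ some (⟨0, hp⟩, ⟨m - 1, Nat.sub_lt hm Nat.one_pos⟩)}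

/-- The double spider `B_{p₁,p₂,s}`: two adjacent centers (`Sum.inl false`, `Sum.inl true`),
with `p₁` legs of `s` vertices on the first and `p₂` legs of `s` vertices on the second. -/
def btree (p₁ p₂ s : ℕ) : SimpleGraph (Bool ⊕ ((Fin p₁ ⊕ Fin p₂) × Fin s)) :=
  SimpleGraph.fromRel fun a b =>
    match a, b with
    | Sum.inl x, Sum.inl y => x ≠ y
    | Sum.inl false, Sum.inr (Sum.inl _, j) => (j : ℕ) = 0
    | Sum.inl true, Sum.inr (Sum.inr _, j) => (j : ℕ) = 0
    | Sum.inr (c, j), Sum.inr (c', j') => c = c' ∧ (j : ℕ) + 1 = (j' : ℕ)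
    | _, _ => False

/-- `G` contains a subgraph isomorphic to `H`. -/
def ContainsSub {V W : Type*} (G : SimpleGraph V) (H : SimpleGraph W) : Prop :=
  ∃ f : W → V, Function.Injective f ∧ ∀ a b, H.Adj a b → G.Adj (f a) (f b)

/-- A pendant path on `s` vertices `P 0, …, P (s-1)` attached to `w`:
`P 0` is a leaf, consecutive vertices are adjacent, interior vertices have degree 2,
and `P (s-1)` is adjacent to `w`. -/
def IsPendantPath {V : Type*} (T : SimpleGraph V) (s : ℕ) (P : ℕ → V) (w : V) : Prop :=
  Set.InjOn P (Set.Iio s) ∧ (∀ i < s, P i ≠ w) ∧ IsLeaf T (P 0) ∧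
    (∀ i, i + 1 < s → T.Adj (P i) (P (i + 1))) ∧
    (∀ i, 0 < i → i < s → (T.neighborSet (P i)).ncard = 2) ∧
    T.Adj (P (s - 1)) w

/-- Isomorphism of simple graphs on `Fin n` as a setoid. -/
def graphSetoid (n : ℕ) : Setoid (SimpleGraph (Fin n)) where
  r G H := Nonempty (G ≃g H)
  iseqv := ⟨fun _ => ⟨SimpleGraph.Iso.refl⟩, fun ⟨e⟩ => ⟨e.symm⟩, fun ⟨e⟩ ⟨f⟩ => ⟨e.trans f⟩⟩

/-- The number of isomorphism classes of graphs in a set of graphs on `Fin n`. -/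
noncomputable def numIsoClasses {n : ℕ} (S : Set (SimpleGraph (Fin n))) : ℕ :=
  ((fun G => Quotient.mk (graphSetoid n) G) '' S).ncard

set_option linter.unusedSectionVars false
namespace Aux
open SimpleGraph

variable {V : Type} [Fintype V] {T : SimpleGraph V}

lemma eq_of_ncard_one {N : Set V} (h : N.ncard = 1) {a : V} (ha : a ∈ N) : N = {a} := by
  symm
  exact Set.eq_of_subset_of_ncard_le (by simpa using ha) (by simp [h]) N.toFinite

lemma eq_of_ncard_two {N : Set V} (h : N.ncard = 2) {a b : V} (ha : a ∈ N) (hb : b ∈ N)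
    (hab : a ≠ b) : N = {a, b} := by
  symm
  exact Set.eq_of_subset_of_ncard_le (by simp [Set.insert_subset_iff, ha, hb])
    (by rw [h, Set.ncard_pair hab]) N.toFinite

lemma abs_sub_le_walk (f : V → ℤ) (hf : ∀ u v, T.Adj u v → |f u - f v| ≤ 1) :
    ∀ {u v : V} (p : T.Walk u v), |f u - f v| ≤ p.length := by
  intro u v p
  induction p with
  | nil => simp
  | @cons a b c h p ih =>
    have h1 := hf _ _ h
    have h2 := abs_sub_abs_le_abs_sub (f a - f c) (f b - f c)
    simp only [Walk.length_cons]
    push_cast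
    have := abs_sub_le (f a) (f b) (f c)
    linarith [abs_sub_le (f a) (f b) (f c)]

lemma abs_sub_le_dist (hc : T.Connected) (f : V → ℤ)
    (hf : ∀ u v, T.Adj u v → |f u - f v| ≤ 1) (u v : V) :
    |f u - f v| ≤ T.dist u v := by
  obtain ⟨p, hp⟩ := (hc.preconnected u v).exists_walk_length_eq_dist
  rw [← hp]
  exact abs_sub_le_walk f hf p

section PP

variable {s : ℕ} {R : ℕ → V} {w : V}

lemma pp_adj (hR : IsPendantPath T s R w) (hs : 1 ≤ s) {i : ℕ} (hi : i < s) {x : V}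
    (h : T.Adj (R i) x) :
    (i + 1 < s ∧ x = R (i + 1)) ∨ (1 ≤ i ∧ x = R (i - 1)) ∨ (i = s - 1 ∧ x = w) := by
  obtain ⟨hinj, hne, hleaf, hchain, hdeg, hlast⟩ := hR
  have hxmem : x ∈ T.neighborSet (R i) := h
  rcases Nat.eq_zero_or_pos i with rfl | hipos
  · rcases eq_or_lt_of_le hs with hs1 | hs2
    · -- s = 1
      have : T.neighborSet (R 0) = {w} := by
        apply eq_of_ncard_one hleaf
        have : T.Adj (R (s-1)) w := hlast
        rw [← hs1] at this
        exact this
      right; right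
      refine ⟨by omega, by simpa [this] using hxmem⟩
    · -- s ≥ 2
      have hadj01 : T.Adj (R 0) (R 1) := hchain 0 (by omega)
      have : T.neighborSet (R 0) = {R 1} := eq_of_ncard_one hleaf hadj01
      left
      exact ⟨by omega, by simpa [this] using hxmem⟩
  · rcases eq_or_lt_of_le (Nat.succ_le_of_lt hi) with hlast' | hmid
    · -- i = s - 1
      have hieq : i = s - 1 := by omega
      have hadjprev : T.Adj (R i) (R (i-1)) := by
        have := hchain (i-1) (by omega)
        have h2 : i - 1 + 1 = i := by omega
        rw [h2] at this
        exact this.symm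
      have hadjw : T.Adj (R i) w := by rw [hieq]; exact hlast
      have hneq : R (i-1) ≠ w := hne _ (by omega)
      have hN : T.neighborSet (R i) = {R (i-1), w} :=
        eq_of_ncard_two (hdeg i hipos hi) hadjprev hadjw hneq
      rw [hN] at hxmem
      rcases hxmem with h1 | h1
      · right; left; exact ⟨hipos, h1⟩
      · right; right; exact ⟨hieq, h1⟩
    · -- 0 < i < s - 1
      have hadjprev : T.Adj (R i) (R (i-1)) := by
        have := hchain (i-1) (by omega)
        have h2 : i - 1 + 1 = i := by omega
        rw [h2] at this
        exact this.symm
      have hadjnext : T.Adj (R i) (R (i+1)) := hchain i (by omega)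
      have hneq : R (i-1) ≠ R (i+1) := by
        intro hcon
        have := hinj (Set.mem_Iio.mpr (by omega : i - 1 < s)) (Set.mem_Iio.mpr (by omega : i + 1 < s)) hcon
        omega
      have hN : T.neighborSet (R i) = {R (i-1), R (i+1)} :=
        eq_of_ncard_two (hdeg i hipos hi) hadjprev hadjnext hneq
      rw [hN] at hxmem
      rcases hxmem with h1 | h1
      · right; left; exact ⟨hipos, h1⟩
      · left; exact ⟨by omega, h1⟩


open Classical in
noncomputable def fR (T : SimpleGraph V) (s : ℕ) (R : ℕ → V) (w : V) (x : V) : ℤ :=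
  if h : ∃ j, j < s ∧ x = R j then (h.choose : ℤ) - s else T.dist w x

lemma fR_mem (hR : IsPendantPath T s R w) {i : ℕ} (hi : i < s) :
    fR T s R w (R i) = (i : ℤ) - s := by
  have h : ∃ j, j < s ∧ R i = R j := ⟨i, hi, rfl⟩
  rw [fR, dif_pos h]
  obtain ⟨hj, he⟩ := h.choose_spec
  have : h.choose = i := hR.1 (Set.mem_Iio.mpr hj) (Set.mem_Iio.mpr hi) he.symm
  rw [this]

lemma fR_not {x : V} (hx : ∀ j < s, x ≠ R j) : fR T s R w x = T.dist w x := by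
  rw [fR, dif_neg]
  rintro ⟨j, hj, he⟩
  exact hx j hj he

lemma fR_lip_aux (hc : T.Connected) (hR : IsPendantPath T s R w) (hs : 1 ≤ s)
    {u v : V} (h : T.Adj u v) : fR T s R w u - fR T s R w v ≤ 1 := by
  have hwR : ∀ j < s, w ≠ R j := fun j hj he => hR.2.1 j hj he.symm
  by_cases hu : ∃ j, j < s ∧ u = R j
  · obtain ⟨i, hi, rfl⟩ := hu
    rw [fR_mem hR hi]
    rcases pp_adj hR hs hi h with ⟨h1, rfl⟩ | ⟨h1, rfl⟩ | ⟨h1, rfl⟩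
    · rw [fR_mem hR h1]; push_cast; omega
    · rw [fR_mem hR (by omega : i - 1 < s)]
      have : ((i - 1 : ℕ) : ℤ) = (i : ℤ) - 1 := by omega
      rw [this]; omega
    · rw [fR_not hwR, SimpleGraph.dist_self]; omega
  · push_neg at hu
    rw [fR_not hu]
    by_cases hv : ∃ j, j < s ∧ v = R j
    · obtain ⟨j, hj, rfl⟩ := hv
      rw [fR_mem hR hj]
      rcases pp_adj hR hs hj h.symm with ⟨h1, he⟩ | ⟨h1, he⟩ | ⟨h1, he⟩
      · exact absurd he (hu _ h1)
      · exact absurd he (hu _ (by omega))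
      · subst he
        rw [SimpleGraph.dist_self]; omega
    · push_neg at hv
      rw [fR_not hv]
      have h1 : T.dist w u ≤ T.dist w v + T.dist v u := hc.dist_triangle
      have h2 : T.dist v u = 1 := SimpleGraph.dist_eq_one_iff_adj.mpr h.symm
      omega

lemma fR_lip (hc : T.Connected) (hR : IsPendantPath T s R w) (hs : 1 ≤ s) :
    ∀ u v, T.Adj u v → |fR T s R w u - fR T s R w v| ≤ 1 := by
  intro u v h
  rw [abs_sub_le_iff]
  exact ⟨fR_lip_aux hc hR hs h, fR_lip_aux hc hR hs h.symm⟩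

lemma pp_dist_w_le (hc : T.Connected) (hR : IsPendantPath T s R w) :
    ∀ d i, i < s → s - i = d + 1 → T.dist (R i) w ≤ d + 1 := by
  intro d
  induction d with
  | zero =>
    intro i hi he
    have hieq : i = s - 1 := by omega
    subst hieq
    exact le_of_eq (SimpleGraph.dist_eq_one_iff_adj.mpr hR.2.2.2.2.2)
  | succ d ih =>
    intro i hi he
    have h1 : i + 1 < s := by omega
    have h2 : T.dist (R i) w ≤ T.dist (R i) (R (i+1)) + T.dist (R (i+1)) w :=
      hc.dist_triangle
    have h3 : T.dist (R i) (R (i+1)) = 1 :=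
      SimpleGraph.dist_eq_one_iff_adj.mpr (hR.2.2.2.1 i h1)
    have h4 := ih (i+1) h1 (by omega)
    omega

lemma pp_dist_w (hc : T.Connected) (hR : IsPendantPath T s R w) (hs : 1 ≤ s)
    {i : ℕ} (hi : i < s) : T.dist (R i) w + i = s := by
  have hup : T.dist (R i) w ≤ s - i := by
    have := pp_dist_w_le hc hR (s - i - 1) i hi (by omega)
    omega
  have hwR : ∀ j < s, w ≠ R j := fun j hj he => hR.2.1 j hj he.symm
  have hlow := abs_sub_le_dist hc _ (fR_lip hc hR hs) (R i) w
  rw [fR_mem hR hi, fR_not hwR, SimpleGraph.dist_self] at hlow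
  rw [abs_le] at hlow
  omega

lemma pp_chain_le (hc : T.Connected) (hR : IsPendantPath T s R w) :
    ∀ d i, i + d < s → T.dist (R i) (R (i + d)) ≤ d := by
  intro d
  induction d with
  | zero => intro i _; simp
  | succ d ih =>
    intro i hi
    show T.dist (R i) (R (i + d + 1)) ≤ d + 1
    have h2 : T.dist (R i) (R (i + d + 1)) ≤
        T.dist (R i) (R (i + d)) + T.dist (R (i + d)) (R (i + d + 1)) :=
      hc.dist_triangle
    have h3 : T.dist (R (i + d)) (R (i + d + 1)) = 1 :=
      SimpleGraph.dist_eq_one_iff_adj.mpr (hR.2.2.2.1 (i + d) (by omega))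
    have h4 := ih i (by omega)
    omega

lemma pp_dist_chain (hc : T.Connected) (hR : IsPendantPath T s R w) (hs : 1 ≤ s)
    {i j : ℕ} (hij : i ≤ j) (hj : j < s) : T.dist (R i) (R j) + i = j := by
  have hup : T.dist (R i) (R j) ≤ j - i := by
    have := pp_chain_le hc hR (j - i) i (by omega)
    have he : i + (j - i) = j := by omega
    rwa [he] at this
  have hlow := abs_sub_le_dist hc _ (fR_lip hc hR hs) (R i) (R j)
  rw [fR_mem hR (by omega : i < s), fR_mem hR hj, abs_le] at hlow
  omega

lemma pp_dist_off (hc : T.Connected) (hR : IsPendantPath T s R w) (hs : 1 ≤ s)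
    {i : ℕ} (hi : i < s) {v : V} (hv : ∀ j < s, v ≠ R j) :
    T.dist (R i) v + i = T.dist w v + s := by
  have hup : T.dist (R i) v ≤ T.dist (R i) w + T.dist w v := hc.dist_triangle
  have hw := pp_dist_w hc hR hs hi
  have hlow := abs_sub_le_dist hc _ (fR_lip hc hR hs) (R i) v
  rw [fR_mem hR hi, fR_not hv, abs_le] at hlow
  omega

end PP

lemma lift_walk {S : Set V} : ∀ {u v : V} (p : T.Walk u v),
    (∀ x ∈ p.support, x ∈ S) → ∀ (hu : u ∈ S) (hv : v ∈ S),
    ∃ q : (T.induce S).Walk ⟨u, hu⟩ ⟨v, hv⟩, q.length = p.length := by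
  intro u v p
  induction p with
  | nil => intro _ hu hv; exact ⟨SimpleGraph.Walk.nil, rfl⟩
  | @cons a b c had p ih =>
    intro hp hu hv
    have hb : b ∈ S := hp b (by simp)
    obtain ⟨q, hq⟩ := ih (fun x hx => hp x (by simp [hx])) hb hv
    have hadj : (T.induce S).Adj ⟨a, hu⟩ ⟨b, hb⟩ := by simpa using had
    exact ⟨SimpleGraph.Walk.cons hadj q, by simp [hq]⟩

def inclHom (T : SimpleGraph V) (S : Set V) : T.induce S →g T :=
  ⟨Subtype.val, fun {a b} h => by simpa using h⟩

lemma proj_walk {S : Set V} {a b : S} (q : (T.induce S).Walk a b) :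
    ∃ p : T.Walk (a : V) b, p.length = q.length :=
  ⟨q.map (inclHom T S), SimpleGraph.Walk.length_map _ _⟩

lemma induce_dist (hc : T.Connected) {S : Set V}
    (hblock : ∀ x, x ∉ S → ∀ u v : V, u ∈ S → v ∈ S → T.dist u v < T.dist u x + T.dist x v)
    (a b : S) : (T.induce S).dist a b = T.dist (a : V) b := by
  classical
  obtain ⟨p, hp⟩ := (hc.preconnected a b).exists_walk_length_eq_dist
  have hsupp : ∀ x ∈ p.support, x ∈ S := by
    intro x hx
    by_contra hxS
    have h1 : T.dist (a : V) x ≤ (p.takeUntil x hx).length := SimpleGraph.dist_le _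
    have h2 : T.dist x (b : V) ≤ (p.dropUntil x hx).length := SimpleGraph.dist_le _
    have h3 : (p.takeUntil x hx).length + (p.dropUntil x hx).length = p.length := by
      rw [← SimpleGraph.Walk.length_append, p.take_spec hx]
    have := hblock x hxS a b a.2 b.2
    omega
  obtain ⟨q, hq⟩ := lift_walk p hsupp a.2 b.2
  apply le_antisymm
  · have h4 : (T.induce S).dist a b ≤ q.length := SimpleGraph.dist_le q
    omega
  · have hr : (T.induce S).Reachable a b := ⟨q⟩
    obtain ⟨q', hq'⟩ := hr.exists_walk_length_eq_dist
    obtain ⟨p', hp'⟩ := proj_walk q'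
    have h5 : T.dist (a : V) b ≤ p'.length := SimpleGraph.dist_le p'
    omega

lemma exists_max_ext (G : SimpleGraph V) (k : ℕ) {J : Set V}
    (hJ : DkIndep G k J) : ∃ E, MaxDkIndep G k E ∧ J ⊆ E := by
  obtain ⟨E, hE, hmax⟩ := Set.Finite.exists_maximalFor Set.ncard
    {K : Set V | DkIndep G k K ∧ J ⊆ K} (Set.toFinite _) ⟨J, hJ, subset_rfl⟩
  refine ⟨E, ⟨hE.1, fun J' hJ' hsub => ?_⟩, hE.2⟩
  have hmem : J' ∈ {K : Set V | DkIndep G k K ∧ J ⊆ K} := ⟨hJ', hE.2.trans hsub⟩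
  have hle : E.ncard ≤ J'.ncard := Set.ncard_le_ncard hsub J'.toFinite
  exact (Set.eq_of_subset_of_ncard_le hsub (hmax hmem hle) J'.toFinite).symm

lemma max_of_dominates {G : SimpleGraph V} {k : ℕ} {J : Set V} (hJ : DkIndep G k J)
    (hdom : ∀ v, v ∉ J → ∃ u ∈ J, u ≠ v ∧ G.dist u v ≤ k) : MaxDkIndep G k J := by
  refine ⟨hJ, fun J' hJ' hsub => ?_⟩
  refine Set.Subset.antisymm (fun v hv => ?_) hsub
  by_contra hvJ
  obtain ⟨u, huJ, hune, hud⟩ := hdom v hvJ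
  have := hJ' (hsub huJ) hv hune
  omega

lemma dominates_of_max {G : SimpleGraph V} {k : ℕ} {J : Set V} (hJ : MaxDkIndep G k J)
    {v : V} (hv : v ∉ J) : ∃ u ∈ J, G.dist u v ≤ k := by
  by_contra h
  push_neg at h
  have hind : DkIndep G k (insert v J) := by
    intro a ha b hb hab
    rcases ha with rfl | ha
    · rcases hb with rfl | hb
      · exact absurd rfl hab
      · have h1 := h b hb
        have h2 : G.dist b a = G.dist a b := SimpleGraph.dist_comm
        omega
    · rcases hb with rfl | hb
      · have h1 := h a ha
        omega
      · exact hJ.1 ha hb hab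
  have heq := hJ.2 _ hind (Set.subset_insert v J)
  rw [← heq] at hv
  exact hv (Set.mem_insert v J)


lemma assemble {W V : Type} [Finite W] [Finite V] (G : SimpleGraph V) (G' : SimpleGraph W)
    (k m : ℕ) (φ : Set W → Set V) (E : ℕ → Set V) (I : Finset ℕ) (hI : I.card = m)
    (hφ : ∀ J', MaxDkIndep G' k J' → MaxDkIndep G k (φ J'))
    (hφinj : Set.InjOn φ {J' | MaxDkIndep G' k J'})
    (hE : ∀ j ∈ I, MaxDkIndep G k (E j))
    (hEinj : Set.InjOn E ↑I)
    (hdisj : ∀ J', MaxDkIndep G' k J' → ∀ j ∈ I, φ J' ≠ E j) :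
    mdi G' k + m ≤ mdi G k := by
  classical
  have hA : (φ '' {J' | MaxDkIndep G' k J'}).ncard = mdi G' k :=
    Set.ncard_image_of_injOn hφinj
  have hB : (E '' ↑I).ncard = m := by
    rw [Set.ncard_image_of_injOn hEinj, Set.ncard_coe_finset, hI]
  have hsub : (φ '' {J' | MaxDkIndep G' k J'}) ∪ (E '' ↑I) ⊆ {J | MaxDkIndep G k J} := by
    rintro X (hX | hX)
    · obtain ⟨J', hJ', rfl⟩ := hX
      exact hφ J' hJ'
    · obtain ⟨j, hj, rfl⟩ := hX
      exact hE j (Finset.mem_coe.mp hj)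
  have hdis : Disjoint (φ '' {J' | MaxDkIndep G' k J'}) (E '' ↑I) := by
    rw [Set.disjoint_left]
    rintro X ⟨J', hJ', rfl⟩ ⟨j, hj, he⟩
    exact hdisj J' hJ' j (Finset.mem_coe.mp hj) he.symm
  have hun := Set.ncard_union_eq hdis (Set.toFinite _) (Set.toFinite _)
  have hle := Set.ncard_le_ncard hsub (Set.toFinite _)
  rw [hun, hA, hB] at hle
  exact hle

end Aux

/-- Let `w` be a vertex of degree ≥ 3 in a tree `T`, adjacent to two
distinct pendant paths `P`, `Q`, each on `s ≥ 1` vertices, and let `T'` be obtained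
from `T` by deleting the `s` vertices of `Q`. Then for `k ≥ 2`:
(i) if `k ≥ 2s` then `mdi_k(T) ≥ mdi_k(T') + s`;
(ii) if `k = 2s − 1` or `k = 2s − 2` then `mdi_k(T) ≥ mdi_k(T') + s − 1`. -/

theorem stmt_8 {V : Type} [Fintype V] (T : SimpleGraph V) (hT : T.IsTree)
    (s : ℕ) (hs : 1 ≤ s) (w : V) (hw : 3 ≤ (T.neighborSet w).ncard)
    (P Q : ℕ → V) (hP : IsPendantPath T s P w) (hQ : IsPendantPath T s Q w)
    (hdisj : ∀ i < s, ∀ j < s, P i ≠ Q j) (k : ℕ) (hk : 2 ≤ k) :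
    (2 * s ≤ k → mdi (T.induce {x | ∀ j < s, x ≠ Q j}) k + s ≤ mdi T k) ∧
    ((k = 2 * s - 1 ∨ k = 2 * s - 2) →
      mdi (T.induce {x | ∀ j < s, x ≠ Q j}) k + (s - 1) ≤ mdi T k) := by
  classical
  have hc : T.Connected := hT.isConnected
  set Sset : Set V := {x | ∀ j < s, x ≠ Q j} with hSset
  -- basic membership facts
  have hPS : ∀ i < s, P i ∈ Sset := fun i hi j hj => hdisj i hi j hj
  have hQmem : ∀ x, x ∉ Sset → ∃ j, j < s ∧ x = Q j := by
    intro x hx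
    by_contra hcon
    push_neg at hcon
    exact hx (fun j hj => hcon j hj)
  -- distances are preserved in the induced subgraph
  have hblock : ∀ x, x ∉ Sset → ∀ u v : V, u ∈ Sset → v ∈ Sset →
      T.dist u v < T.dist u x + T.dist x v := by
    intro x hx u v hu hv
    obtain ⟨j, hj, rfl⟩ := hQmem x hx
    have h1 : T.dist (Q j) u + j = T.dist w u + s := Aux.pp_dist_off hc hQ hs hj hu
    have h2 : T.dist (Q j) v + j = T.dist w v + s := Aux.pp_dist_off hc hQ hs hj hv
    have h3 : T.dist u v ≤ T.dist u w + T.dist w v := hc.dist_triangle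
    have h4 : T.dist u (Q j) = T.dist (Q j) u := SimpleGraph.dist_comm
    have h5 : T.dist u w = T.dist w u := SimpleGraph.dist_comm
    omega
  have key1 : ∀ a b : ↥Sset, (T.induce Sset).dist a b = T.dist (a : V) b :=
    Aux.induce_dist hc hblock
  -- independent sets transfer forward
  have hindep_fwd : ∀ J' : Set ↥Sset, DkIndep (T.induce Sset) k J' →
      DkIndep T k (Subtype.val '' J') := by
    intro J' hJ' u hu v hv hne
    obtain ⟨u', hu', rfl⟩ := hu
    obtain ⟨v', hv', rfl⟩ := hv
    have hne' : u' ≠ v' := fun h => hne (by rw [h])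
    have := hJ' hu' hv' hne'
    rwa [key1 u' v'] at this
  -- domination transfer for vertices of T'
  have hdomS : ∀ (J' : Set ↥Sset), MaxDkIndep (T.induce Sset) k J' → ∀ v, v ∈ Sset →
      v ∉ Subtype.val '' J' → ∃ u ∈ Subtype.val '' J', u ≠ v ∧ T.dist u v ≤ k := by
    intro J' hJ' v hvS hvim
    by_cases hvmem : (⟨v, hvS⟩ : ↥Sset) ∈ J'
    · exact absurd ⟨⟨v, hvS⟩, hvmem, rfl⟩ hvim
    · obtain ⟨u', hu', hud⟩ := Aux.dominates_of_max hJ' hvmem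
      refine ⟨↑u', ⟨u', hu', rfl⟩, ?_, ?_⟩
      · intro he
        exact hvmem (by rwa [show (⟨v, hvS⟩ : ↥Sset) = u' from Subtype.ext he.symm])
      · rw [← key1 u' ⟨v, hvS⟩]
        exact hud
  -- the extra maximal sets E j extending {Q j}
  have hEex : ∀ j, j < s → ∃ Ej, MaxDkIndep T k Ej ∧ Q j ∈ Ej := by
    intro j hj
    have hsing : DkIndep T k {Q j} := by
      intro a ha b hb hne
      rw [Set.mem_singleton_iff] at ha hb
      subst ha; subst hb
      exact absurd rfl hne
    obtain ⟨Ej, hmax, hsub⟩ := Aux.exists_max_ext T k hsing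
    exact ⟨Ej, hmax, hsub rfl⟩
  set E : ℕ → Set V := fun j => if h : j < s then (hEex j h).choose else ∅ with hEdef
  have hEspec : ∀ j, ∀ h : j < s, MaxDkIndep T k (E j) ∧ Q j ∈ E j := by
    intro j h
    simp only [hEdef]
    rw [dif_pos h]
    exact (hEex j h).choose_spec
  -- no indep set contains two Q's (when s ≤ k+1)
  have hQQ : s ≤ k + 1 → ∀ (X : Set V), DkIndep T k X → ∀ j1 j2, j1 < j2 → j2 < s →
      Q j1 ∈ X → Q j2 ∈ X → False := by
    intro hsk X hX j1 j2 h12 h2s hm1 hm2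
    have hne : Q j1 ≠ Q j2 := by
      intro he
      have := hQ.1 (Set.mem_Iio.mpr (by omega : j1 < s)) (Set.mem_Iio.mpr h2s) he
      omega
    have hd := hX hm1 hm2 hne
    have hch := Aux.pp_dist_chain hc hQ hs (le_of_lt h12) h2s
    omega
  have hEinjI : s ≤ k + 1 → ∀ (I : Finset ℕ), (∀ j ∈ I, j < s) → Set.InjOn E ↑I := by
    intro hsk I hIlt j1 hj1 j2 hj2 he
    have hj1' := hIlt j1 (Finset.mem_coe.mp hj1)
    have hj2' := hIlt j2 (Finset.mem_coe.mp hj2)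
    by_contra hne
    rcases lt_or_gt_of_ne hne with h12 | h21
    · exact hQQ hsk (E j2) (hEspec j2 hj2').1.1 j1 j2 h12 hj2'
        (he ▸ (hEspec j1 hj1').2) (hEspec j2 hj2').2
    · exact hQQ hsk (E j1) (hEspec j1 hj1').1.1 j2 j1 h21 hj1'
        (he ▸ (hEspec j2 hj2').2) (hEspec j1 hj1').2
  have hQnotim : ∀ (Jx : Set ↥Sset) j, j < s → Q j ∉ Subtype.val '' Jx := by
    rintro Jx j hj ⟨u', _, he⟩
    exact u'.2 j hj he
  constructor
  · -- case (i) : 2s ≤ k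
    intro hki
    have hsk : s ≤ k + 1 := by omega
    -- the main map: J' ↦ val '' J'
    have hQdom_i : ∀ u, u ∈ Sset → T.dist (P 0) u ≤ k → ∀ j, j < s →
        T.dist u (Q j) ≤ k := by
      intro u huS hPu j hj
      have e1 : T.dist (Q j) u + j = T.dist w u + s := Aux.pp_dist_off hc hQ hs hj huS
      have e2 : T.dist u (Q j) = T.dist (Q j) u := SimpleGraph.dist_comm
      by_cases hup : ∃ i, i < s ∧ u = P i
      · obtain ⟨i, hi, rfl⟩ := hup
        have e3 : T.dist (P i) w + i = s := Aux.pp_dist_w hc hP hs hi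
        have e4 : T.dist w (P i) = T.dist (P i) w := SimpleGraph.dist_comm
        omega
      · push_neg at hup
        have e3 : T.dist (P 0) u + 0 = T.dist w u + s :=
          Aux.pp_dist_off hc hP hs (by omega) hup
        omega
    have hP0dom : ∀ (J' : Set ↥Sset), MaxDkIndep (T.induce Sset) k J' →
        ∃ u ∈ Subtype.val '' J', T.dist (P 0) u ≤ k := by
      intro J' hJ'
      by_cases hP0 : (⟨P 0, hPS 0 hs⟩ : ↥Sset) ∈ J'
      · exact ⟨P 0, ⟨_, hP0, rfl⟩, by rw [SimpleGraph.dist_self]; omega⟩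
      · obtain ⟨u', hu', hud⟩ := Aux.dominates_of_max hJ' hP0
        refine ⟨↑u', ⟨u', hu', rfl⟩, ?_⟩
        rw [SimpleGraph.dist_comm, ← key1 u' ⟨P 0, hPS 0 hs⟩]
        exact hud
    have hφmax : ∀ J', MaxDkIndep (T.induce Sset) k J' →
        MaxDkIndep T k (Subtype.val '' J') := by
      intro J' hJ'
      apply Aux.max_of_dominates (hindep_fwd J' hJ'.1)
      intro v hv
      by_cases hvS : v ∈ Sset
      · exact hdomS J' hJ' v hvS hv
      · obtain ⟨j, hj, rfl⟩ := hQmem v hvS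
        obtain ⟨u, huim, hPu⟩ := hP0dom J' hJ'
        have huS : u ∈ Sset := by
          obtain ⟨u', _, rfl⟩ := huim
          exact u'.2
        exact ⟨u, huim, fun he => huS j hj he, hQdom_i u huS hPu j hj⟩
    have hφinj : Set.InjOn (fun J' : Set ↥Sset => Subtype.val '' J')
        {J' | MaxDkIndep (T.induce Sset) k J'} :=
      fun J1 _ J2 _ h => Set.image_injective.mpr Subtype.val_injective h
    have hE' : ∀ j ∈ Finset.range s, MaxDkIndep T k (E j) :=
      fun j hj => (hEspec j (Finset.mem_range.mp hj)).1
    have hAB : ∀ J', MaxDkIndep (T.induce Sset) k J' → ∀ j ∈ Finset.range s,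
        Subtype.val '' J' ≠ E j := by
      intro J' _ j hj he
      exact hQnotim J' j (Finset.mem_range.mp hj) (he ▸ (hEspec j (Finset.mem_range.mp hj)).2)
    exact Aux.assemble T (T.induce Sset) k s _ E (Finset.range s) (Finset.card_range s)
      hφmax hφinj hE' (hEinjI hsk _ (fun j hj => Finset.mem_range.mp hj)) hAB
  · -- case (ii) : k = 2s-1 or k = 2s-2
    intro hkii
    have hsle : s ≤ k ∧ 2 ≤ s := by rcases hkii with h | h <;> omega
    have hsk : s ≤ k + 1 := by omega
    set φ : Set ↥Sset → Set V := fun J' =>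
      if ∃ u : ↥Sset, u ∈ J' ∧ T.dist w ↑u ≤ k - s then Subtype.val '' J'
      else insert (Q 0) (Subtype.val '' J') with hφdef
    have hφpos : ∀ J', (∃ u : ↥Sset, u ∈ J' ∧ T.dist w ↑u ≤ k - s) → φ J' = Subtype.val '' J' := by
      intro J' h
      simp only [hφdef]
      rw [if_pos h]
    have hφneg : ∀ J', ¬(∃ u : ↥Sset, u ∈ J' ∧ T.dist w ↑u ≤ k - s) →
        φ J' = insert (Q 0) (Subtype.val '' J') := by
      intro J' h
      simp only [hφdef]
      rw [if_neg h]
    have hφmax : ∀ J', MaxDkIndep (T.induce Sset) k J' → MaxDkIndep T k (φ J') := by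
      intro J' hJ'
      by_cases hC : ∃ u : ↥Sset, u ∈ J' ∧ T.dist w ↑u ≤ k - s
      · rw [hφpos J' hC]
        apply Aux.max_of_dominates (hindep_fwd J' hJ'.1)
        intro v hv
        by_cases hvS : v ∈ Sset
        · exact hdomS J' hJ' v hvS hv
        · obtain ⟨j, hj, rfl⟩ := hQmem v hvS
          obtain ⟨u₀, hu₀, hdu₀⟩ := hC
          have huS : (↑u₀ : V) ∈ Sset := u₀.2
          have e1 : T.dist (Q j) ↑u₀ + j = T.dist w ↑u₀ + s :=
            Aux.pp_dist_off hc hQ hs hj huS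
          have e2 : T.dist (↑u₀ : V) (Q j) = T.dist (Q j) ↑u₀ := SimpleGraph.dist_comm
          exact ⟨↑u₀, ⟨u₀, hu₀, rfl⟩, fun he => huS j hj he, by omega⟩
      · rw [hφneg J' hC]
        push_neg at hC
        have hind2 : DkIndep T k (insert (Q 0) (Subtype.val '' J')) := by
          intro a ha b hb hne
          rcases ha with rfl | ha
          · rcases hb with rfl | hb
            · exact absurd rfl hne
            · obtain ⟨u', hu', rfl⟩ := hb
              have e1 : T.dist (Q 0) ↑u' + 0 = T.dist w ↑u' + s :=
                Aux.pp_dist_off hc hQ hs (by omega) u'.2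
              have e2 := hC u' hu'
              omega
          · rcases hb with rfl | hb
            · obtain ⟨u', hu', rfl⟩ := ha
              have e1 : T.dist (Q 0) ↑u' + 0 = T.dist w ↑u' + s :=
                Aux.pp_dist_off hc hQ hs (by omega) u'.2
              have e2 := hC u' hu'
              have e3 : T.dist (↑u' : V) (Q 0) = T.dist (Q 0) ↑u' := SimpleGraph.dist_comm
              omega
            · exact hindep_fwd J' hJ'.1 ha hb hne
        apply Aux.max_of_dominates hind2
        intro v hv
        by_cases hvS : v ∈ Sset
        · have hvim : v ∉ Subtype.val '' J' := fun h => hv (Set.mem_insert_of_mem _ h)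
          obtain ⟨u, hu, hune, hud⟩ := hdomS J' hJ' v hvS hvim
          exact ⟨u, Set.mem_insert_of_mem _ hu, hune, hud⟩
        · obtain ⟨j, hj, rfl⟩ := hQmem v hvS
          have hne0 : Q 0 ≠ Q j := fun he => hv (he ▸ Set.mem_insert (Q 0) _)
          have e1 : T.dist (Q 0) (Q j) + 0 = j :=
            Aux.pp_dist_chain hc hQ hs (Nat.zero_le j) hj
          exact ⟨Q 0, Set.mem_insert _ _, hne0, by omega⟩
    have hQ0nim : ∀ (Jx : Set ↥Sset), Q 0 ∉ Subtype.val '' Jx :=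
      fun Jx => hQnotim Jx 0 (by omega)
    have hφval : ∀ Jx, φ Jx \ {Q 0} = Subtype.val '' Jx := by
      intro Jx
      by_cases hC : ∃ u : ↥Sset, u ∈ Jx ∧ T.dist w ↑u ≤ k - s
      · rw [hφpos Jx hC, Set.diff_singleton_eq_self (hQ0nim Jx)]
      · rw [hφneg Jx hC, Set.insert_diff_of_mem _ (Set.mem_singleton _),
          Set.diff_singleton_eq_self (hQ0nim Jx)]
    have hφinj : Set.InjOn φ {J' | MaxDkIndep (T.induce Sset) k J'} := by
      intro J1 _ J2 _ he
      have h2 : φ J1 \ {Q 0} = φ J2 \ {Q 0} := by rw [he]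
      rw [hφval J1, hφval J2] at h2
      exact Set.image_injective.mpr Subtype.val_injective h2
    have hE' : ∀ j ∈ Finset.Ico 1 s, MaxDkIndep T k (E j) :=
      fun j hj => (hEspec j (Finset.mem_Ico.mp hj).2).1
    have hAB : ∀ J', MaxDkIndep (T.induce Sset) k J' → ∀ j ∈ Finset.Ico 1 s,
        φ J' ≠ E j := by
      intro J' _ j hj he
      obtain ⟨hj1, hjs⟩ := Finset.mem_Ico.mp hj
      have hQjE : Q j ∈ φ J' := he ▸ (hEspec j hjs).2
      have hsub : φ J' ⊆ insert (Q 0) (Subtype.val '' J') := by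
        by_cases hC : ∃ u : ↥Sset, u ∈ J' ∧ T.dist w ↑u ≤ k - s
        · rw [hφpos _ hC]
          exact Set.subset_insert _ _
        · rw [hφneg _ hC]
      rcases hsub hQjE with he0 | him
      · have := hQ.1 (Set.mem_Iio.mpr hjs) (Set.mem_Iio.mpr (by omega : 0 < s)) he0
        omega
      · exact hQnotim J' j hjs him
    exact Aux.assemble T (T.induce Sset) k (s - 1) φ E (Finset.Ico 1 s) (Nat.card_Ico 1 s)
      hφmax hφinj hE' (hEinjI hsk _ (fun j hj => (Finset.mem_Ico.mp hj).2)) hAB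
end

section
/- For every k ≥ 2, if a tree T has diameter at most k + 3 − (k mod 2) and has a branching vertex that is not a central vertex, then T has a leaf that is a k-twin. -/
section TreeTwinAux

open SimpleGraph

variable {V : Type} {T : SimpleGraph V}

/-- In a tree, every path realizes the distance. -/
lemma tree_path_length (hT : T.IsTree) {u v : V} (p : T.Walk u v) (hp : p.IsPath) :
    p.length = T.dist u v := by
  obtain ⟨q, hq, hql⟩ := hT.isConnected.exists_path_of_dist u v
  have h := hT.IsAcyclic.path_unique ⟨p, hp⟩ ⟨q, hq⟩
  rw [show p = q from congrArg Subtype.val h, hql]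

/-- Splitting a tree path at a support vertex splits the distance. -/
lemma tree_split (hT : T.IsTree) {u v x : V} (p : T.Walk u v) (hp : p.IsPath)
    (hx : x ∈ p.support) : T.dist u x + T.dist x v = T.dist u v := by
  classical
  rw [← tree_path_length hT _ (hp.takeUntil hx), ← tree_path_length hT _ (hp.dropUntil hx),
    ← tree_path_length hT p hp, ← SimpleGraph.Walk.length_append, SimpleGraph.Walk.take_spec]

/-- In a tree, adjacent vertices have different distances to any vertex. -/
lemma dist_ne_of_adj (hT : T.IsTree) {a b : V} (h : T.Adj a b) (x : V) :
    T.dist x a ≠ T.dist x b := by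
  intro he
  obtain ⟨p, hp, hl⟩ := hT.isConnected.exists_path_of_dist x b
  have hab : T.dist a b = 1 := SimpleGraph.dist_eq_one_iff_adj.mpr h
  by_cases hmem : a ∈ p.support
  · have hsp := tree_split hT p hp hmem
    have h0 : T.dist a b = 0 := by omega
    exact h.ne (hT.isConnected.dist_eq_zero_iff.mp h0)
  · have hp2 : (p.concat h.symm).IsPath := by
      rw [SimpleGraph.Walk.isPath_def, SimpleGraph.Walk.support_concat,
        List.nodup_append]
      refine ⟨(SimpleGraph.Walk.isPath_def _).mp hp, List.nodup_singleton _, ?_⟩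
      intro y hy z hy' hyz
      simp only [List.mem_singleton] at hy'
      apply hmem; rw [← hy', ← hyz]; exact hy
    have hlen := tree_path_length hT _ hp2
    rw [SimpleGraph.Walk.length_concat, hl, he] at hlen
    omega

/-- Existence of the branch representative: first vertex of the geodesic. -/
lemma exists_branch (hT : T.IsTree) {w v : V} (hv : v ≠ w) :
    ∃ b, T.Adj w b ∧ T.dist b v + 1 = T.dist w v := by
  obtain ⟨p, hp, hl⟩ := hT.isConnected.exists_path_of_dist w v
  cases p with
  | nil => exact absurd rfl hv
  | cons h q =>
    refine ⟨_, h, ?_⟩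
    have h1 := tree_path_length hT q hp.of_cons
    rw [SimpleGraph.Walk.length_cons] at hl
    omega

/-- Existence of the parent: penultimate vertex of the geodesic. -/
lemma exists_parent (hT : T.IsTree) {w v : V} (hv : v ≠ w) :
    ∃ u, T.Adj u v ∧ T.dist w u + 1 = T.dist w v := by
  obtain ⟨p, hp, hl⟩ := hT.isConnected.exists_path_of_dist v w
  cases p with
  | nil => exact absurd rfl hv
  | cons h q =>
    rename_i y
    refine ⟨_, h.symm, ?_⟩
    have h1 := tree_path_length hT q hp.of_cons
    rw [SimpleGraph.Walk.length_cons] at hl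
    rw [SimpleGraph.dist_comm] at h1 hl
    omega

/-- Two branches meeting at the same vertex coincide. -/
lemma branch_eq (hT : T.IsTree) {w b b' v : V} (hb : T.Adj w b) (hb' : T.Adj w b')
    (hv : T.dist b v + 1 = T.dist w v) (hv' : T.dist b' v + 1 = T.dist w v) : b = b' := by
  by_contra hne
  have hwn : ∀ {c : V} (_ : T.Adj w c) {q : T.Walk c v}, q.IsPath →
      (T.dist c v + 1 = T.dist w v) → w ∉ q.support := by
    intro c hc q hq hcv hwmem
    have hsp := tree_split hT q hq hwmem
    have h1 : T.dist c w = 1 := by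
      rw [SimpleGraph.dist_comm]; exact SimpleGraph.dist_eq_one_iff_adj.mpr hc
    omega
  obtain ⟨p, hp, hl⟩ := hT.isConnected.exists_path_of_dist b v
  obtain ⟨p', hp', hl'⟩ := hT.isConnected.exists_path_of_dist b' v
  have hP : (SimpleGraph.Walk.cons hb p).IsPath := hp.cons (hwn hb hp hv)
  have hP' : (SimpleGraph.Walk.cons hb' p').IsPath := hp'.cons (hwn hb' hp' hv')
  have hEq := hT.IsAcyclic.path_unique ⟨SimpleGraph.Walk.cons hb p, hP⟩
    ⟨SimpleGraph.Walk.cons hb' p', hP'⟩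
  have hEqw : SimpleGraph.Walk.cons hb p = SimpleGraph.Walk.cons hb' p' :=
    congrArg Subtype.val hEq
  have hmem : b' ∈ (SimpleGraph.Walk.cons hb p).support := by
    rw [hEqw, SimpleGraph.Walk.support_cons]
    exact List.mem_cons_of_mem _ p'.start_mem_support
  rw [SimpleGraph.Walk.support_cons] at hmem
  rcases List.mem_cons.mp hmem with h1 | h1
  · exact hb'.ne h1.symm
  · have hsp := tree_split hT p hp h1
    have h0 : T.dist b b' = 0 := by omega
    exact hne (hT.isConnected.dist_eq_zero_iff.mp h0)

/-- Every non-start vertex of a geodesic from `w` lies in the branch of its endpoint. -/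
lemma support_in_branch (hT : T.IsTree) {w b u : V} (hb : T.Adj w b)
    (hu : T.dist b u + 1 = T.dist w u) {p : T.Walk w u} (hp : p.IsPath)
    (hl : p.length = T.dist w u) {x : V} (hx : x ∈ p.support) (hxw : x ≠ w) :
    T.dist b x + 1 = T.dist w x := by
  cases p with
  | nil =>
    simp only [SimpleGraph.Walk.support_nil, List.mem_singleton] at hx
    exact absurd hx hxw
  | cons h q =>
    rename_i y
    have hq : q.IsPath := hp.of_cons
    have hql := tree_path_length hT q hq
    rw [SimpleGraph.Walk.length_cons] at hl
    have hyu : T.dist y u + 1 = T.dist w u := by omega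
    have hby : b = y := branch_eq hT hb h hu hyu
    subst hby
    rw [SimpleGraph.Walk.support_cons] at hx
    rcases List.mem_cons.mp hx with h1 | h1
    · exact absurd h1 hxw
    · have hs1 := tree_split hT q hq h1
      have hp2 : (SimpleGraph.Walk.cons h q).IsPath := hp
      have hs2 := tree_split hT _ hp2 (by
        rw [SimpleGraph.Walk.support_cons]; exact List.mem_cons_of_mem _ h1)
      omega

/-- Separation: the distance between vertices in different branches at `w` splits at `w`. -/
lemma branch_sep (hT : T.IsTree) {w b c u y : V} (hb : T.Adj w b) (hc : T.Adj w c)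
    (hbc : b ≠ c) (hu : T.dist b u + 1 = T.dist w u) (hy : T.dist c y + 1 = T.dist w y) :
    T.dist u y = T.dist w u + T.dist w y := by
  obtain ⟨p, hp, hl⟩ := hT.isConnected.exists_path_of_dist w u
  obtain ⟨q, hq, hql⟩ := hT.isConnected.exists_path_of_dist w y
  have hP : (p.reverse.append q).IsPath := by
    rw [SimpleGraph.Walk.isPath_def, SimpleGraph.Walk.support_append, List.nodup_append]
    refine ⟨(SimpleGraph.Walk.isPath_def _).mp hp.reverse,
      (((SimpleGraph.Walk.isPath_def _).mp hq).sublist (q.support.tail_sublist)), ?_⟩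
    intro a ha z ha' haz
    subst haz
    have haq : a ∈ q.support := q.support.tail_sublist.mem ha'
    have hap : a ∈ p.support := by
      rw [SimpleGraph.Walk.support_reverse] at ha; exact List.mem_reverse.mp ha
    by_cases haw : a = w
    · subst haw
      have : q.support.Nodup := (SimpleGraph.Walk.isPath_def _).mp hq
      rw [q.support_eq_cons] at this
      exact (List.nodup_cons.mp this).1 ha'
    · have h1 := support_in_branch hT hb hu hp hl hap haw
      have h2 := support_in_branch hT hc hy hq hql haq haw
      exact hbc (branch_eq hT hb hc h1 h2)
  have hlen := tree_path_length hT _ hP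
  rw [SimpleGraph.Walk.length_append, SimpleGraph.Walk.length_reverse, hl, hql] at hlen
  exact hlen.symm

/-- Adjacent vertices are at distance 1 (in a connected graph). -/
lemma adj_dist_one {u v : V} (h : T.Adj u v) : T.dist u v = 1 :=
  SimpleGraph.dist_eq_one_iff_adj.mpr h

/-- Descent: every depth between 1 and the depth of `v` is realized within the branch. -/
lemma exists_at_depth (hT : T.IsTree) {w b : V} (hb : T.Adj w b) :
    ∀ n v, T.dist b v + 1 = T.dist w v → T.dist w v = n →
      ∀ i, 1 ≤ i → i ≤ n → ∃ u, T.dist b u + 1 = T.dist w u ∧ T.dist w u = i := by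
  intro n
  induction n with
  | zero => intro v _ _ i h1 h2; omega
  | succ n ih =>
    intro v hv hn i h1 h2
    rcases eq_or_lt_of_le h2 with rfl | hlt
    · exact ⟨v, hv, hn⟩
    · have hvw : v ≠ w := by
        intro h; subst h; rw [SimpleGraph.dist_self] at hn; omega
      obtain ⟨u, hadj, hu⟩ := exists_parent hT hvw
      have huw : u ≠ w := by
        intro h; subst h; rw [SimpleGraph.dist_self] at hu; omega
      obtain ⟨c, hc, hcu⟩ := exists_branch hT huw
      have hub : T.dist b u + 1 = T.dist w u := by
        by_cases hbc : c = b
        · subst hbc; exact hcu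
        · exfalso
          have hsep := branch_sep hT hc hb hbc hcu hv
          have hd1 : T.dist u v = 1 := adj_dist_one hadj
          omega
      exact ih u hub (by omega) i h1 (by omega)

/-- The deepest vertex of a branch is a leaf. -/
lemma max_depth_leaf (hT : T.IsTree) {w b lam : V} (hb : T.Adj w b)
    (hmem : T.dist b lam + 1 = T.dist w lam)
    (hmax : ∀ y, T.dist b y + 1 = T.dist w y → T.dist w y ≤ T.dist w lam) :
    IsLeaf T lam := by
  have h1 : 1 ≤ T.dist w lam := by omega
  have hlw : lam ≠ w := by
    intro h; subst h; rw [SimpleGraph.dist_self] at h1; omega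
  obtain ⟨p₀, hadj₀, hp₀⟩ := exists_parent hT hlw
  have key : ∀ y, T.Adj lam y → y = p₀ := by
    intro y hy
    -- first: depth of y is dist w lam - 1
    have hdy : T.dist w y + 1 = T.dist w lam := by
      have hne := dist_ne_of_adj hT hy w
      have hd1 : T.dist lam y = 1 := adj_dist_one hy
      have htri1 : T.dist w y ≤ T.dist w lam + 1 := by
        have := hT.isConnected.dist_triangle (u := w) (v := lam) (w := y)
        omega
      have htri2 : T.dist w lam ≤ T.dist w y + 1 := by
        have h3 := hT.isConnected.dist_triangle (u := w) (v := y) (w := lam)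
        have h4 : T.dist y lam = 1 := by rw [SimpleGraph.dist_comm]; exact hd1
        omega
      have hcase : T.dist w y + 1 = T.dist w lam ∨ T.dist w y = T.dist w lam + 1 := by omega
      rcases hcase with h5 | h5
      · exact h5
      · exfalso
        have hyw : y ≠ w := by
          intro h; subst h; rw [SimpleGraph.dist_self] at h5; omega
        obtain ⟨c, hc, hyc⟩ := exists_branch hT hyw
        by_cases hcb : c = b
        · subst hcb; have := hmax y hyc; omega
        · have hsep := branch_sep hT hc hb hcb hyc hmem
          have h6 : T.dist y lam = 1 := by rw [SimpleGraph.dist_comm]; exact adj_dist_one hy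
          omega
    -- uniqueness of the parent
    by_contra hne
    obtain ⟨q, hq, hql⟩ := hT.isConnected.exists_path_of_dist w p₀
    obtain ⟨r, hr, hrl⟩ := hT.isConnected.exists_path_of_dist w y
    have hlq : lam ∉ q.support := by
      intro hmem'
      have hsp := tree_split hT q hq hmem'
      have hd : T.dist lam p₀ = 1 := by
        rw [SimpleGraph.dist_comm]; exact adj_dist_one hadj₀
      omega
    have hlr : lam ∉ r.support := by
      intro hmem'
      have hsp := tree_split hT r hr hmem'
      have hd : T.dist lam y = 1 := adj_dist_one hy
      omega
    have hQ : (q.concat hadj₀).IsPath := by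
      rw [SimpleGraph.Walk.isPath_def, SimpleGraph.Walk.support_concat,
        List.nodup_append]
      exact ⟨(SimpleGraph.Walk.isPath_def _).mp hq, List.nodup_singleton _,
        fun a ha z ha' haz => hlq (by simp only [List.mem_singleton] at ha'; rw [← ha', ← haz]; exact ha)⟩
    have hR : (r.concat hy.symm).IsPath := by
      rw [SimpleGraph.Walk.isPath_def, SimpleGraph.Walk.support_concat,
        List.nodup_append]
      exact ⟨(SimpleGraph.Walk.isPath_def _).mp hr, List.nodup_singleton _,
        fun a ha z ha' haz => hlr (by simp only [List.mem_singleton] at ha'; rw [← ha', ← haz]; exact ha)⟩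
    have hEq := hT.IsAcyclic.path_unique ⟨q.concat hadj₀, hQ⟩ ⟨r.concat hy.symm, hR⟩
    have hEqw : q.concat hadj₀ = r.concat hy.symm := congrArg Subtype.val hEq
    have hy_in : y ∈ (q.concat hadj₀).support := by
      rw [hEqw, SimpleGraph.Walk.support_concat]
      exact List.mem_append_left _ r.end_mem_support
    rw [SimpleGraph.Walk.support_concat] at hy_in
    rcases List.mem_append.mp hy_in with hmem' | hmem'
    · have hsp := tree_split hT q hq hmem'
      have h0 : T.dist y p₀ = 0 := by omega
      exact hne (hT.isConnected.dist_eq_zero_iff.mp h0)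
    · simp only [List.mem_singleton] at hmem'
      exact hy.ne hmem'.symm
  have hns : T.neighborSet lam = {p₀} := by
    ext y
    simp only [SimpleGraph.mem_neighborSet, Set.mem_singleton_iff]
    exact ⟨key y, fun h => h ▸ hadj₀.symm⟩
  rw [IsLeaf, hns, Set.ncard_singleton]

/-- The key construction: the deepest leaf of the shallower of two branches is a twin
of the equal-depth vertex of the other branch. -/
lemma key_aux {V : Type} [Fintype V] (k : ℕ) {T : SimpleGraph V} (hT : T.IsTree)
    {w b₂ b₃ lam₂ lam₃ : V} (hb₂ : T.Adj w b₂) (hb₃ : T.Adj w b₃) (hne : b₂ ≠ b₃)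
    (hm₂ : T.dist b₂ lam₂ + 1 = T.dist w lam₂)
    (hm₃ : T.dist b₃ lam₃ + 1 = T.dist w lam₃)
    (hmax₃ : ∀ y, T.dist b₃ y + 1 = T.dist w y → T.dist w y ≤ T.dist w lam₃)
    (hle : T.dist w lam₃ ≤ T.dist w lam₂)
    (hbound : ∀ y, (T.dist b₂ y + 1 = T.dist w y ∨ T.dist b₃ y + 1 = T.dist w y) →
      T.dist w lam₃ + T.dist w y ≤ k) :
    ∃ ℓ, IsLeaf T ℓ ∧ KTwin T k ℓ := by
  obtain ⟨u, hub, hud⟩ := exists_at_depth hT hb₂ (T.dist w lam₂) lam₂ hm₂ rfl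
    (T.dist w lam₃) (by omega) hle
  refine ⟨lam₃, max_depth_leaf hT hb₃ hm₃ hmax₃, u, ?_, ?_⟩
  · intro h
    subst h
    exact hne (branch_eq hT hb₂ hb₃ hub hm₃)
  · ext y
    simp only [_root_.ball, Set.mem_setOf_eq]
    by_cases hy : T.dist b₂ y + 1 = T.dist w y ∨ T.dist b₃ y + 1 = T.dist w y
    · have hb := hbound y hy
      have hcomm₃ : T.dist lam₃ w = T.dist w lam₃ := SimpleGraph.dist_comm
      have hcommu : T.dist u w = T.dist w u := SimpleGraph.dist_comm
      have ht₃ : T.dist lam₃ y ≤ k := by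
        have := hT.isConnected.dist_triangle (u := lam₃) (v := w) (w := y)
        omega
      have htu : T.dist u y ≤ k := by
        have := hT.isConnected.dist_triangle (u := u) (v := w) (w := y)
        omega
      constructor <;> intro _ <;> assumption
    · push_neg at hy
      obtain ⟨hy2, hy3⟩ := hy
      by_cases hyw : y = w
      · subst hyw
        rw [SimpleGraph.dist_comm (u := lam₃), SimpleGraph.dist_comm (u := u)]
        rw [hud]
      · obtain ⟨c, hc, hyc⟩ := exists_branch hT hyw
        have hc2 : c ≠ b₂ := fun h => hy2 (h ▸ hyc)
        have hc3 : c ≠ b₃ := fun h => hy3 (h ▸ hyc)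
        have hs3 := branch_sep hT hb₃ hc hc3.symm hm₃ hyc
        have hsu := branch_sep hT hb₂ hc hc2.symm hub hyc
        rw [hs3, hsu, hud]

end TreeTwinAux

/-- For `k ≥ 2`, if a tree `T` has diameter at most `k + 3 − (k mod 2)`
and has a branching vertex that is not central, then `T` has a leaf that is a `k`-twin. -/
theorem stmt_9 {V : Type} [Fintype V] (k : ℕ) (hk : 2 ≤ k) (T : SimpleGraph V)
    (hT : T.IsTree) (hdiam : gdiam T ≤ k + 3 - k % 2)
    (w : V) (hw : 3 ≤ (T.neighborSet w).ncard) (hnc : ¬ IsCentral T w) :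
    ∃ ℓ, IsLeaf T ℓ ∧ KTwin T k ℓ := by
  classical
  have hconn := hT.isConnected
  simp only [IsCentral, not_forall, not_le] at hnc
  obtain ⟨z, hz⟩ := hnc
  -- the deepest vertex from w
  obtain ⟨ℓ₁, -, hℓ₁⟩ := Finset.exists_mem_eq_sup (Finset.univ : Finset V)
    ⟨w, Finset.mem_univ w⟩ (T.dist w)
  have heccw : ecc T w = T.dist w ℓ₁ := hℓ₁
  have hzlt : ecc T z < T.dist w ℓ₁ := heccw ▸ hz
  have hH1 : 1 ≤ T.dist w ℓ₁ := by omega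
  have hℓ₁w : ℓ₁ ≠ w := by
    intro h; subst h; rw [SimpleGraph.dist_self] at hH1; omega
  obtain ⟨b₁, hb₁, hℓ₁b⟩ := exists_branch hT hℓ₁w
  have hzw : z ≠ w := by
    intro h; subst h; omega
  obtain ⟨cz, hcz, hzc⟩ := exists_branch hT hzw
  have hzℓ₁ : T.dist z ℓ₁ ≤ ecc T z := Finset.le_sup (Finset.mem_univ ℓ₁)
  have hwz1 : 1 ≤ T.dist w z := hconn.pos_dist_of_ne (fun h => hzw h.symm)
  have hzb₁ : cz = b₁ := by
    by_contra hne
    have hsep := branch_sep hT hcz hb₁ hne hzc hℓ₁b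
    omega
  subst hzb₁
  -- key bound for non-b₁ branches
  have KB : ∀ c, T.Adj w c → c ≠ cz → ∀ y, T.dist c y + 1 = T.dist w y →
      2 * T.dist w y + 2 ≤ gdiam T := by
    intro c hc hcb y hy
    have h1 := branch_sep hT hcz hc (fun h => hcb h.symm) hzc hy
    have h2 : T.dist z y ≤ ecc T z := Finset.le_sup (Finset.mem_univ y)
    have h3 := branch_sep hT hcz hc (fun h => hcb h.symm) hℓ₁b hy
    have h4a : T.dist ℓ₁ y ≤ ecc T ℓ₁ := Finset.le_sup (Finset.mem_univ y)
    have h4b : ecc T ℓ₁ ≤ gdiam T := Finset.le_sup (Finset.mem_univ ℓ₁)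
    have h4 : T.dist ℓ₁ y ≤ gdiam T := le_trans h4a h4b
    omega
  -- pick two neighbors of w different from b₁
  have hb₁mem : cz ∈ T.neighborSet w := hcz
  have hcard : 1 < (T.neighborSet w \ {cz}).ncard := by
    have := Set.ncard_diff_singleton_of_mem hb₁mem
    omega
  obtain ⟨c₂, c₃, hc₂, hc₃, hcc⟩ := (Set.one_lt_ncard_iff (Set.toFinite _)).mp hcard
  obtain ⟨hadj₂, hcb₂⟩ : T.Adj w c₂ ∧ c₂ ≠ cz := by
    obtain ⟨h1, h2⟩ := hc₂; exact ⟨h1, by simpa using h2⟩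
  obtain ⟨hadj₃, hcb₃⟩ : T.Adj w c₃ ∧ c₃ ≠ cz := by
    obtain ⟨h1, h2⟩ := hc₃; exact ⟨h1, by simpa using h2⟩
  -- deepest vertices of the two branches
  have branchMax : ∀ c, T.Adj w c → ∃ lam, (T.dist c lam + 1 = T.dist w lam) ∧
      ∀ y, T.dist c y + 1 = T.dist w y → T.dist w y ≤ T.dist w lam := by
    intro c hc
    have hcmem : c ∈ {v | T.dist c v + 1 = T.dist w v} := by
      simp only [Set.mem_setOf_eq, SimpleGraph.dist_self]
      rw [SimpleGraph.dist_comm]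
      rw [adj_dist_one hc.symm]
    obtain ⟨lam, hmem, hmax⟩ := Set.exists_max_image {v | T.dist c v + 1 = T.dist w v}
      (T.dist w) (Set.toFinite _) ⟨c, hcmem⟩
    exact ⟨lam, hmem, hmax⟩
  obtain ⟨lam₂, hm₂, hmax₂⟩ := branchMax c₂ hadj₂
  obtain ⟨lam₃, hm₃, hmax₃⟩ := branchMax c₃ hadj₃
  have hKB₂ := KB c₂ hadj₂ hcb₂
  have hKB₃ := KB c₃ hadj₃ hcb₃
  rcases le_total (T.dist w lam₃) (T.dist w lam₂) with hle | hle
  · refine key_aux k hT hadj₂ hadj₃ hcc hm₂ hm₃ hmax₃ hle ?_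
    intro y hy
    have h1 := hKB₃ lam₃ hm₃
    have h2 : 2 * T.dist w y + 2 ≤ gdiam T := by
      rcases hy with hy | hy
      · exact hKB₂ y hy
      · exact hKB₃ y hy
    omega
  · refine key_aux k hT hadj₃ hadj₂ (Ne.symm hcc) hm₃ hm₂ hmax₂ hle ?_
    intro y hy
    have h1 := hKB₂ lam₂ hm₂
    have h2 : 2 * T.dist w y + 2 ≤ gdiam T := by
      rcases hy with hy | hy
      · exact hKB₃ y hy
      · exact hKB₂ y hy
    omega
end
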